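/- Let n ≥ 2 and let f : E^n → E^n be a surjective function. Suppose r₁ and r₂ are strongly preserved by f with r₁ − r₂ ≤ 2·r₂ < r₁ + r₂ and r₁, r₂ > 0. Then r₁ − r₂ is strongly preserved by f. -/

import Mathlib

open RealInnerProductSpace

lemma aux_orth (n : ℕ) (hn : 2 ≤ n) (v : EuclideanSpace ℝ (Fin n)) :
    ∃ e : EuclideanSpace ℝ (Fin n), ‖e‖ = 1 ∧ ⟪v, e⟫ = 0 := by
  have hpos : 0 < Module.finrank ℝ ((ℝ ∙ v)ᗮ : Submodule ℝ (EuclideanSpace ℝ (Fin n))) := by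
    have h := Submodule.finrank_add_finrank_orthogonal (𝕜 := ℝ) (ℝ ∙ v)
    rw [finrank_euclideanSpace_fin] at h
    have hle : Module.finrank ℝ (ℝ ∙ v : Submodule ℝ (EuclideanSpace ℝ (Fin n))) ≤ 1 := by
      rcases eq_or_ne v 0 with h0 | h0
      · subst h0; rw [Submodule.span_zero_singleton]; simp
      · rw [finrank_span_singleton h0]
    omega
  obtain ⟨u, hu⟩ := Module.finrank_pos_iff_exists_ne_zero.mp hpos
  refine ⟨‖(u : EuclideanSpace ℝ (Fin n))‖⁻¹ • (u : EuclideanSpace ℝ (Fin n)), ?_, ?_⟩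
  · have hu0 : (u : EuclideanSpace ℝ (Fin n)) ≠ 0 := fun h => hu (Subtype.ext h)
    rw [norm_smul, norm_inv, norm_norm, inv_mul_cancel₀ (norm_ne_zero_iff.mpr hu0)]
  · rw [inner_smul_right]
    have : ⟪v, (u : EuclideanSpace ℝ (Fin n))⟫ = 0 := by
      have h2 := u.2
      rw [Submodule.mem_orthogonal] at h2
      exact real_inner_comm v u ▸ h2 v (Submodule.mem_span_singleton_self v)
    rw [this, mul_zero]

lemma aux_norm_sq (n : ℕ) (c h : ℝ) (v e : EuclideanSpace ℝ (Fin n))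
    (hev : ⟪v, e⟫ = 0) :
    ‖c • v + h • e‖ ^ 2 = c ^ 2 * ‖v‖ ^ 2 + h ^ 2 * ‖e‖ ^ 2 := by
  rw [norm_add_sq_real, inner_smul_left, inner_smul_right, norm_smul, norm_smul]
  simp [hev, mul_pow, sq_abs]

lemma aux_construct (n : ℕ) {a b : EuclideanSpace ℝ (Fin n)} {d : ℝ} (hd : dist a b = d)
    (hd0 : 0 < d) (s h p q : ℝ) (hp : 0 ≤ p) (hq : 0 ≤ q)
    (hsp : s ^ 2 + h ^ 2 = p ^ 2) (hsq : (d - s) ^ 2 + h ^ 2 = q ^ 2)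
    (e : EuclideanSpace ℝ (Fin n)) (he : ‖e‖ = 1) (hev : ⟪b - a, e⟫ = 0) :
    dist a (a + (s / d) • (b - a) + h • e) = p ∧
      dist b (a + (s / d) • (b - a) + h • e) = q := by
  have hv : ‖b - a‖ = d := by rw [← dist_eq_norm, dist_comm]; exact hd
  constructor
  · have h1 : a + (s / d) • (b - a) + h • e - a = (s / d) • (b - a) + h • e := by abel
    rw [dist_eq_norm, ← norm_neg, neg_sub, h1, ← Real.sqrt_sq (norm_nonneg _),
      aux_norm_sq n _ _ _ _ hev, hv, he]
    have : (s / d) ^ 2 * d ^ 2 + h ^ 2 * 1 ^ 2 = p ^ 2 := by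
      field_simp
      linarith [hsp]
    rw [this, Real.sqrt_sq hp]
  · have h1 : a + (s / d) • (b - a) + h • e - b = (s / d - 1) • (b - a) + h • e := by
      rw [sub_smul, one_smul]; abel
    rw [dist_eq_norm, ← norm_neg, neg_sub, h1, ← Real.sqrt_sq (norm_nonneg _),
      aux_norm_sq n _ _ _ _ hev, hv, he]
    have : (s / d - 1) ^ 2 * d ^ 2 + h ^ 2 * 1 ^ 2 = q ^ 2 := by
      field_simp
      nlinarith [hsq]
    rw [this, Real.sqrt_sq hq]

/-- Two circles with radii p (around a) and q (around b) meeting strictly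
(|q-p| < d < q+p) have two distinct common points. -/
lemma aux_two_points (n : ℕ) (hn : 2 ≤ n) {a b : EuclideanSpace ℝ (Fin n)} {d p q : ℝ}
    (hd : dist a b = d) (hp : 0 < p) (hq : 0 < q)
    (h1 : q - p < d) (h2 : p - q < d) (h3 : d < q + p) :
    ∃ z z' : EuclideanSpace ℝ (Fin n), z ≠ z' ∧ dist a z = p ∧ dist b z = q ∧
      dist a z' = p ∧ dist b z' = q := by
  have hd0 : 0 < d := by
    rcases lt_trichotomy (q - p) 0 with h | h | h
    · linarith
    · linarith
    · linarith
  obtain ⟨e, he, hev⟩ := aux_orth n hn (b - a)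
  set s : ℝ := (d ^ 2 + p ^ 2 - q ^ 2) / (2 * d) with hs
  have hh2 : 0 < p ^ 2 - s ^ 2 := by
    rw [hs]
    rw [div_pow, sub_pos, div_lt_iff₀ (by positivity : (0:ℝ) < (2*d)^2)]
    nlinarith [mul_pos (mul_pos (show (0:ℝ) < d + p - q by linarith) (show (0:ℝ) < d - p + q by linarith)) (mul_pos (show (0:ℝ) < q + p - d by linarith) (show (0:ℝ) < d + p + q by linarith))]
  set h : ℝ := Real.sqrt (p ^ 2 - s ^ 2) with hhdef
  have hhpos : 0 < h := Real.sqrt_pos.mpr hh2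
  have hhsq : h ^ 2 = p ^ 2 - s ^ 2 := Real.sq_sqrt hh2.le
  have hsp : s ^ 2 + h ^ 2 = p ^ 2 := by rw [hhsq]; ring
  have hsq' : (d - s) ^ 2 + h ^ 2 = q ^ 2 := by
    rw [hhsq, hs]
    field_simp
    ring
  have c1 := aux_construct n hd hd0 s h p q hp.le hq.le hsp hsq' e he hev
  have hsp2 : s ^ 2 + (-h) ^ 2 = p ^ 2 := by rw [neg_pow]; simpa using hsp
  have hsq2 : (d - s) ^ 2 + (-h) ^ 2 = q ^ 2 := by rw [neg_pow]; simpa using hsq'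
  have c2 := aux_construct n hd hd0 s (-h) p q hp.le hq.le hsp2 hsq2 e he hev
  refine ⟨_, _, ?_, c1.1, c1.2, c2.1, c2.2⟩
  intro hcontra
  have heq : h • e = (-h) • e := by
    have h' := hcontra
    rw [add_assoc, add_assoc] at h'
    exact add_left_cancel (add_left_cancel h')
  rw [neg_smul] at heq
  have hz : (h + h) • e = 0 := by rw [add_smul]; nth_rewrite 2 [heq]; abel
  rw [smul_eq_zero] at hz
  rcases hz with h' | h'
  · linarith
  · rw [h'] at he; simp at he

lemma aux_equidistant (n : ℕ) (hn : 2 ≤ n) {a b : EuclideanSpace ℝ (Fin n)} {d r : ℝ}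
    (hd : dist a b = d) (hd0 : 0 < d) (hr : 0 < r) (hdr : d ≤ 2 * r) :
    ∃ w : EuclideanSpace ℝ (Fin n), dist a w = r ∧ dist b w = r := by
  obtain ⟨e, he, hev⟩ := aux_orth n hn (b - a)
  have hh2 : 0 ≤ r ^ 2 - (d / 2) ^ 2 := by nlinarith
  set h : ℝ := Real.sqrt (r ^ 2 - (d / 2) ^ 2) with hhdef
  have hhsq : h ^ 2 = r ^ 2 - (d / 2) ^ 2 := Real.sq_sqrt hh2
  have hsp : (d / 2) ^ 2 + h ^ 2 = r ^ 2 := by rw [hhsq]; ring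
  have hsq' : (d - d / 2) ^ 2 + h ^ 2 = r ^ 2 := by rw [hhsq]; ring
  have c := aux_construct n hd hd0 (d / 2) h r r hr.le hr.le hsp hsq' e he hev
  exact ⟨_, c.1, c.2⟩

/-- Internal tangency: if `dist x y = q - p` then there is a unique point at distance
`p` from `x` and `q` from `y`. -/
lemma aux_tangent (n : ℕ) {x y : EuclideanSpace ℝ (Fin n)} {p q : ℝ}
    (hp : 0 < p) (hq : p < q) (hxy : dist x y = q - p) :
    ∃! z : EuclideanSpace ℝ (Fin n), dist x z = p ∧ dist y z = q := by
  have hd0 : (0:ℝ) < q - p := by linarith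
  have hq0 : (0:ℝ) < q := by linarith
  refine ⟨AffineMap.lineMap y x (q / (q - p)), ⟨?_, ?_⟩, ?_⟩
  · -- dist x z = p
    rw [dist_comm, dist_lineMap_right]
    rw [dist_comm y x, hxy]
    rw [Real.norm_eq_abs, abs_of_nonpos (by rw [sub_nonpos, le_div_iff₀ hd0]; nlinarith)]
    field_simp
    ring
  · rw [dist_comm, dist_lineMap_left, dist_comm y x, hxy, Real.norm_eq_abs,
      abs_of_pos (by positivity)]
    field_simp
  · rintro z ⟨hz1, hz2⟩
    -- triangle equality forces betweenness
    have htri : dist y x + dist x z = dist y z := by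
      rw [dist_comm y x, hxy, hz1, hz2]; ring
    have hw : Wbtw ℝ y x z := dist_add_dist_eq_iff.mp htri
    obtain ⟨t, ht01, hx⟩ := hw
    have hxy' : dist x y = ‖t‖ * dist y z := by
      rw [← hx, dist_lineMap_left]
    rw [hxy, hz2, Real.norm_eq_abs, abs_of_nonneg ht01.1] at hxy'
    have ht : t = (q - p) / q := by field_simp at hxy' ⊢; linarith
    have ht0 : t ≠ 0 := by rw [ht]; positivity
    -- from x = lineMap y z t recover z
    rw [AffineMap.lineMap_apply] at hx
    have hzz : z = AffineMap.lineMap y x t⁻¹ := by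
      rw [AffineMap.lineMap_apply]
      have : x -ᵥ y = t • (z -ᵥ y) := by
        rw [← hx]; simp
      rw [this, smul_smul, inv_mul_cancel₀ ht0, one_smul]
      simp
    rw [hzz, ht]
    congr 1
    rw [inv_div]

lemma aux_inj (n : ℕ) (f : EuclideanSpace ℝ (Fin n) → EuclideanSpace ℝ (Fin n))
    (r : ℝ) (hr : 0 < r)
    (hp : ∀ x y, dist x y = r ↔ dist (f x) (f y) = r) :
    Function.Injective f := by
  intro x y hfxy
  by_contra hne
  have hd0 : 0 < dist x y := dist_pos.mpr hne
  set z := x + (r / dist x y) • (x - y) with hz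
  have hxz : dist x z = r := by
    rw [hz, dist_self_add_right, norm_smul, Real.norm_eq_abs, abs_of_pos (by positivity),
      ← dist_eq_norm]
    field_simp
  have hyz : dist y z = dist x y + r := by
    have : z - y = (1 + r / dist x y) • (x - y) := by
      rw [hz, add_smul, one_smul]; abel
    rw [dist_eq_norm, ← norm_neg, neg_sub, this, norm_smul, Real.norm_eq_abs,
      abs_of_pos (by positivity), ← dist_eq_norm]
    field_simp
  have h1 : dist (f x) (f z) = r := (hp x z).mp hxz
  rw [hfxy] at h1
  have h2 : dist y z = r := (hp y z).mpr h1
  rw [hyz] at h2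
  linarith

lemma aux_forward (n : ℕ) (hn : 2 ≤ n)
    (f : EuclideanSpace ℝ (Fin n) → EuclideanSpace ℝ (Fin n))
    (hf : Function.Surjective f)
    (r₁ r₂ : ℝ) (hr₁ : 0 < r₁) (hr₂ : 0 < r₂)
    (h₁ : r₁ - r₂ ≤ 2 * r₂) (h₂ : 2 * r₂ < r₁ + r₂)
    (hp₁ : ∀ x y, dist x y = r₁ ↔ dist (f x) (f y) = r₁)
    (hp₂ : ∀ x y, dist x y = r₂ ↔ dist (f x) (f y) = r₂) :
    ∀ x y, dist x y = r₁ - r₂ → dist (f x) (f y) = r₁ - r₂ := by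
  have hr21 : r₂ < r₁ := by linarith
  intro x y hxy
  have hd0 : (0:ℝ) < r₁ - r₂ := by linarith
  -- unique tangency point upstairs
  obtain ⟨z₀, ⟨hz₀1, hz₀2⟩, hz₀u⟩ := aux_tangent n hr₂ hr21 hxy
  -- equidistant point
  obtain ⟨w, hw1, hw2⟩ := aux_equidistant n hn hxy hd0 hr₂ h₁
  -- downstairs facts
  have hfw1 : dist (f x) (f w) = r₂ := (hp₂ x w).mp hw1
  have hfw2 : dist (f y) (f w) = r₂ := (hp₂ y w).mp hw2
  have hD2r : dist (f x) (f y) ≤ 2 * r₂ := by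
    calc dist (f x) (f y) ≤ dist (f x) (f w) + dist (f w) (f y) := dist_triangle _ _ _
    _ = 2 * r₂ := by rw [dist_comm (f w) (f y), hfw1, hfw2]; ring
  have hfz1 : dist (f x) (f z₀) = r₂ := (hp₂ x z₀).mp hz₀1
  have hfz2 : dist (f y) (f z₀) = r₁ := (hp₁ y z₀).mp hz₀2
  have hDlow : r₁ - r₂ ≤ dist (f x) (f y) := by
    have := dist_triangle (f y) (f x) (f z₀)
    rw [hfz2, hfz1, dist_comm (f y) (f x)] at this
    linarith
  by_contra hne
  have hlt : r₁ - r₂ < dist (f x) (f y) := lt_of_le_of_ne hDlow (fun h => hne h.symm)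
  have hup : dist (f x) (f y) < r₁ + r₂ := by linarith
  -- two distinct intersection points downstairs
  obtain ⟨z, z', hzz', ha1, hb1, ha2, hb2⟩ :=
    aux_two_points n hn (rfl : dist (f x) (f y) = _) hr₂ hr₁ hlt (by linarith) hup
  obtain ⟨u, hu⟩ := hf z
  obtain ⟨u', hu'⟩ := hf z'
  have hu1 : dist x u = r₂ := (hp₂ x u).mpr (by rw [hu]; exact ha1)
  have hu2 : dist y u = r₁ := (hp₁ y u).mpr (by rw [hu]; exact hb1)
  have hu'1 : dist x u' = r₂ := (hp₂ x u').mpr (by rw [hu']; exact ha2)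
  have hu'2 : dist y u' = r₁ := (hp₁ y u').mpr (by rw [hu']; exact hb2)
  have e1 : u = z₀ := hz₀u u ⟨hu1, hu2⟩
  have e2 : u' = z₀ := hz₀u u' ⟨hu'1, hu'2⟩
  apply hzz'
  rw [← hu, ← hu', e1, e2]

theorem stmt_9 (n : ℕ) (hn : 2 ≤ n)
    (f : EuclideanSpace ℝ (Fin n) → EuclideanSpace ℝ (Fin n))
    (hf : Function.Surjective f)
    (r₁ r₂ : ℝ) (hr₁ : 0 < r₁) (hr₂ : 0 < r₂)
    (h₁ : r₁ - r₂ ≤ 2 * r₂) (h₂ : 2 * r₂ < r₁ + r₂)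
    (hp₁ : ∀ x y, dist x y = r₁ ↔ dist (f x) (f y) = r₁)
    (hp₂ : ∀ x y, dist x y = r₂ ↔ dist (f x) (f y) = r₂) :
    ∀ x y, dist x y = r₁ - r₂ ↔ dist (f x) (f y) = r₁ - r₂ := by
  have hinj : Function.Injective f := aux_inj n f r₂ hr₂ hp₂
  set g := Function.surjInv hf with hg
  have hfg : ∀ a, f (g a) = a := fun a => Function.surjInv_eq hf a
  have hgf : ∀ a, g (f a) = a := fun a => hinj (by rw [hfg])
  have hgsurj : Function.Surjective g := fun a => ⟨f a, hgf a⟩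
  have hgp₁ : ∀ a b, dist a b = r₁ ↔ dist (g a) (g b) = r₁ := by
    intro a b
    rw [hp₁ (g a) (g b), hfg, hfg]
  have hgp₂ : ∀ a b, dist a b = r₂ ↔ dist (g a) (g b) = r₂ := by
    intro a b
    rw [hp₂ (g a) (g b), hfg, hfg]
  intro x y
  constructor
  · exact aux_forward n hn f hf r₁ r₂ hr₁ hr₂ h₁ h₂ hp₁ hp₂ x y
  · intro h
    have := aux_forward n hn g hgsurj r₁ r₂ hr₁ hr₂ h₁ h₂ hgp₁ hgp₂ (f x) (f y) h
    rwa [hgf, hgf] at this
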